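/- Consider a T-stage chain with layer Jacobians F_x^t ∈ ℝ^{n_{t+1}×n_t}, F_u^t ∈ ℝ^{n_{t+1}×m_t}, regularization Hessians L_t ∈ ℝ^{m_t×m_t} symmetric positive definite, and terminal value Hessian V_{xx}^T = z zᵀ for some z ∈ ℝ^{n_T}. Define backward, for t = T−1 down to 0: q_x^t = (F_x^t)ᵀ z^{t+1}, q_u^t = (F_u^t)ᵀ z^{t+1}, Q_uu^t = q_u^t (q_u^t)ᵀ + L_t, c_t = 1 − (q_u^t)ᵀ (Q_uu^t)⁻¹ q_u^t, z^t = √(c_t) · q_x^t, where z^T = z. Then for every t, the Gauss–Newton DDP value Hessian V_{xx}^t defined by V_{xx}^T = z zᵀ and V_{xx}^t = (F_x^t)ᵀ V_{xx}^{t+1} F_x^t − ((F_u^t)ᵀ V_{xx}^{t+1} F_x^t)ᵀ (Q_uu^t)⁻¹ ((F_u^t)ᵀ V_{xx}^{t+1} F_x^t) satisfies V_{xx}^t = z^t (z^t)ᵀ; that is, the outer-product factorization at the final stage is backward propagated to all preceding layers, so every state-dependent second-order matrix is an outer product of vectors. -/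

import Mathlib

open Matrix

private lemma vecMulVec_mulVec' {k l : Type*} [Fintype l] (u : k → ℝ) (v : l → ℝ) (x : l → ℝ) :
    vecMulVec u v *ᵥ x = (v ⬝ᵥ x) • u := by
  ext i
  simp only [mulVec, vecMulVec_apply, dotProduct, Pi.smul_apply, smul_eq_mul,
    Finset.sum_mul, Finset.mul_sum]
  exact Finset.sum_congr rfl fun j _ => by ring

private lemma posSemidef_vecMulVec' {k : Type*} [Fintype k] [DecidableEq k] (u : k → ℝ) :
    (vecMulVec u u).PosSemidef := by
  refine PosSemidef.of_dotProduct_mulVec_nonneg ?_ ?_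
  · ext i j; simp [vecMulVec_apply, mul_comm]
  · intro x
    rw [vecMulVec_mulVec', dotProduct_smul]
    have : star x ⬝ᵥ u = u ⬝ᵥ x := by simp [dotProduct, mul_comm]
    rw [smul_eq_mul, this]
    exact mul_self_nonneg _

private lemma transpose_mul_vecMulVec_mul {a b d : Type*} [Fintype a] [Fintype b] [Fintype d]
    (A : Matrix a b ℝ) (B : Matrix a d ℝ) (u : a → ℝ) :
    Aᵀ * vecMulVec u u * B = vecMulVec (Aᵀ *ᵥ u) (Bᵀ *ᵥ u) := by
  ext i j
  simp only [mul_apply, vecMulVec_apply, transpose_apply, mulVec, dotProduct,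
    Finset.sum_mul, Finset.mul_sum]
  refine Finset.sum_congr rfl fun p _ => Finset.sum_congr rfl fun q _ => by ring

private lemma vecMulVec_mul_mul_vecMulVec {k l : Type*} [Fintype k] [Fintype l]
    (a : l → ℝ) (b : k → ℝ) (M : Matrix k k ℝ) (u : k → ℝ) (v : l → ℝ) :
    vecMulVec a b * M * vecMulVec u v = (b ⬝ᵥ (M *ᵥ u)) • vecMulVec a v := by
  ext i j
  simp only [mul_apply, vecMulVec_apply, Matrix.smul_apply, smul_eq_mul, dotProduct, mulVec,
    Finset.sum_mul, Finset.mul_sum]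
  rw [Finset.sum_comm]
  refine Finset.sum_congr rfl fun p _ => Finset.sum_congr rfl fun q _ => by ring

private lemma vecMulVec_transpose' {k l : Type*} (u : k → ℝ) (v : l → ℝ) :
    (vecMulVec u v)ᵀ = vecMulVec v u := by
  ext i j; simp [vecMulVec_apply, mul_comm]

private lemma c_nonneg {k : Type*} [Fintype k] [DecidableEq k]
    (u : k → ℝ) (M : Matrix k k ℝ) (hM : M.PosDef) :
    0 ≤ 1 - u ⬝ᵥ ((vecMulVec u u + M)⁻¹ *ᵥ u) := by
  set Q := vecMulVec u u + M with hQ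
  have hQpd : Q.PosDef := Matrix.PosDef.posSemidef_add (posSemidef_vecMulVec' u) hM
  have hdet : IsUnit Q.det := hQpd.det_pos.ne'.isUnit
  set w := Q⁻¹ *ᵥ u with hw
  have hQw : Q *ᵥ w = u := by
    rw [hw, mulVec_mulVec, mul_nonsing_inv _ hdet, one_mulVec]
  set c := 1 - u ⬝ᵥ w with hcdef
  have this1 : (u ⬝ᵥ w) • u + M *ᵥ w = u := by
    rw [← vecMulVec_mulVec', ← add_mulVec, ← hQ]
    exact hQw
  have h2 : u - (u ⬝ᵥ w) • u = M *ᵥ w := sub_eq_of_eq_add' this1.symm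
  have hLw : M *ᵥ w = c • u := by
    rw [← h2, hcdef, sub_smul, one_smul]
  have hnn : 0 ≤ w ⬝ᵥ (M *ᵥ w) := by
    have := hM.posSemidef.dotProduct_mulVec_nonneg w
    simpa [star, dotProduct] using this
  rw [hLw, dotProduct_smul, smul_eq_mul] at hnn
  have huw : w ⬝ᵥ u = u ⬝ᵥ w := by simp [dotProduct, mul_comm]
  rw [huw] at hnn
  rw [hcdef] at hnn ⊢
  nlinarith [sq_nonneg (u ⬝ᵥ w)]

/-- The outer-product factorization at the final stage propagates backward:
the Gauss–Newton DDP value Hessian satisfies V_xx^t = z^t (z^t)ᵀ at every stage. -/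
theorem ddp_outer_product_propagation (T : ℕ) (n m : ℕ → ℕ)
    (Fx : ∀ t, Matrix (Fin (n (t+1))) (Fin (n t)) ℝ)
    (Fu : ∀ t, Matrix (Fin (n (t+1))) (Fin (m t)) ℝ)
    (L : ∀ t, Matrix (Fin (m t)) (Fin (m t)) ℝ)
    (hL : ∀ t, (L t).PosDef)
    (z : ∀ t, Fin (n t) → ℝ)
    (qx : ∀ t, Fin (n t) → ℝ) (qu : ∀ t, Fin (m t) → ℝ)
    (Quu : ∀ t, Matrix (Fin (m t)) (Fin (m t)) ℝ) (c : ℕ → ℝ)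
    (V : ∀ t, Matrix (Fin (n t)) (Fin (n t)) ℝ)
    (hqx : ∀ t < T, qx t = (Fx t)ᵀ *ᵥ z (t+1))
    (hqu : ∀ t < T, qu t = (Fu t)ᵀ *ᵥ z (t+1))
    (hQuu : ∀ t < T, Quu t = vecMulVec (qu t) (qu t) + L t)
    (hc : ∀ t < T, c t = 1 - qu t ⬝ᵥ ((Quu t)⁻¹ *ᵥ qu t))
    (hz : ∀ t < T, z t = Real.sqrt (c t) • qx t)
    (hVT : V T = vecMulVec (z T) (z T))
    (hV : ∀ t < T,
      V t = (Fx t)ᵀ * V (t+1) * Fx t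
        - ((Fu t)ᵀ * V (t+1) * Fx t)ᵀ * (Quu t)⁻¹ * ((Fu t)ᵀ * V (t+1) * Fx t)) :
    ∀ t ≤ T, V t = vecMulVec (z t) (z t) := by
  -- step lemma
  have step : ∀ t < T, V (t+1) = vecMulVec (z (t+1)) (z (t+1)) →
      V t = vecMulVec (z t) (z t) := by
    intro t ht ih
    have hcnn : 0 ≤ c t := by
      rw [hc t ht, hQuu t ht]
      exact c_nonneg (qu t) (L t) (hL t)
    have h1 : (Fx t)ᵀ * V (t+1) * Fx t = vecMulVec (qx t) (qx t) := by
      rw [ih, transpose_mul_vecMulVec_mul, ← hqx t ht]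
    have h2 : (Fu t)ᵀ * V (t+1) * Fx t = vecMulVec (qu t) (qx t) := by
      rw [ih, transpose_mul_vecMulVec_mul, ← hqx t ht, ← hqu t ht]
    rw [hV t ht, h1, h2, vecMulVec_transpose', vecMulVec_mul_mul_vecMulVec,
      hz t ht]
    have : vecMulVec (Real.sqrt (c t) • qx t) (Real.sqrt (c t) • qx t)
        = (Real.sqrt (c t) * Real.sqrt (c t)) • vecMulVec (qx t) (qx t) := by
      ext i j; simp [vecMulVec_apply, Matrix.smul_apply]; ring
    rw [this, Real.mul_self_sqrt hcnn]
    have hcc : c t = 1 - qu t ⬝ᵥ ((Quu t)⁻¹ *ᵥ qu t) := hc t ht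
    ext i j
    simp [Matrix.sub_apply, Matrix.smul_apply, vecMulVec_apply, hcc]
    ring
  -- backward induction
  have key : ∀ d t, t + d = T → V t = vecMulVec (z t) (z t) := by
    intro d
    induction d with
    | zero =>
      intro t h
      obtain rfl : t = T := by omega
      exact hVT
    | succ d ihd =>
      intro t h
      have ht : t < T := by omega
      exact step t ht (ihd (t+1) (by omega))
  intro t ht
  exact key (T - t) t (by omega)
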